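/- Define, for c > 0, I(c) = 210 − c^(7/15)·(42/c − 56c + 224). Then I(1) = 0, I'(1) = 0, and I''(1) > 0; in particular c = 1 is an isolated local minimum of I on (0,∞). -/

import Mathlib

/-- The normalized total scalar curvature defect for Spin(9)-invariant metrics on `S¹⁵`. -/
noncomputable def spin9Defect (c : ℝ) : ℝ :=
  210 - c ^ ((7 : ℝ) / 15) * (42 / c - 56 * c + 224)

lemma spin9_hasDerivAt {c : ℝ} (hc : 0 < c) :
    HasDerivAt spin9Defect ((112/15) * ((11*c-3)*(c-1)) * c ^ ((-23:ℝ)/15)) c := by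
  have h1 : HasDerivAt (fun x : ℝ => x ^ ((7:ℝ)/15)) ((7:ℝ)/15 * c ^ ((7:ℝ)/15 - 1)) c :=
    Real.hasDerivAt_rpow_const (Or.inl hc.ne')
  have h2 : HasDerivAt (fun x : ℝ => 42 / x - 56 * x + 224)
      (42 * (-(c^2)⁻¹) - 56) c := by
    have hinv : HasDerivAt (fun x : ℝ => x⁻¹) (-(c^2)⁻¹) c := hasDerivAt_inv hc.ne'
    have h := ((hinv.const_mul (42:ℝ)).sub ((hasDerivAt_id c).const_mul 56)).add_const 224
    simpa [div_eq_mul_inv, mul_comm, mul_one] using h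
  have h := (hasDerivAt_const c (210:ℝ)).sub (h1.mul h2)
  have e1 : c ^ ((7:ℝ)/15 - 1) = c ^ ((-23:ℝ)/15) * c := by
    rw [show (7:ℝ)/15 - 1 = (-23:ℝ)/15 + 1 by norm_num, Real.rpow_add hc, Real.rpow_one]
  have e2 : c ^ ((7:ℝ)/15) = c ^ ((-23:ℝ)/15) * c ^ 2 := by
    rw [show (7:ℝ)/15 = (-23:ℝ)/15 + 2 by norm_num, Real.rpow_add hc,
      show (2:ℝ) = ((2:ℕ):ℝ) by norm_num, Real.rpow_natCast]
  refine h.congr_deriv ?_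
  rw [e1, e2]
  have hc' := hc.ne'
  field_simp
  ring

lemma spin9_deriv_eq {c : ℝ} (hc : 0 < c) :
    deriv spin9Defect c = (112/15) * ((11*c-3)*(c-1)) * c ^ ((-23:ℝ)/15) :=
  (spin9_hasDerivAt hc).deriv

theorem spin9_defect_isolated_local_min :
    spin9Defect 1 = 0 ∧ deriv spin9Defect 1 = 0 ∧ 0 < deriv (deriv spin9Defect) 1 ∧
    ∃ ε > 0, ∀ c : ℝ, 0 < c → |c - 1| < ε → c ≠ 1 → 0 < spin9Defect c := by
  have h10 : spin9Defect 1 = 0 := by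
    simp [spin9Defect, Real.one_rpow]; norm_num
  refine ⟨h10, ?_, ?_, ?_⟩
  · rw [spin9_deriv_eq one_pos]; norm_num
  · -- second derivative
    set g : ℝ → ℝ := fun c => (112/15) * ((11*c-3)*(c-1)) * c ^ ((-23:ℝ)/15) with hg
    have hev : deriv spin9Defect =ᶠ[nhds (1:ℝ)] g := by
      filter_upwards [isOpen_Ioi.mem_nhds (Set.mem_Ioi.mpr one_pos)] with c hc
      exact spin9_deriv_eq hc
    rw [hev.deriv_eq]
    have hu : HasDerivAt (fun c : ℝ => (112/15) * ((11*c-3)*(c-1)))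
        ((112/15) * ((11*(1:ℝ)-3)*1 + 11*((1:ℝ)-1))) 1 := by
      have := ((((hasDerivAt_id (1:ℝ)).const_mul 11).sub_const 3).mul
        ((hasDerivAt_id (1:ℝ)).sub_const 1)).const_mul (112/15 : ℝ)
      simp only [id_eq] at this
      refine this.congr_deriv ?_
      ring
    have hv : HasDerivAt (fun c : ℝ => c ^ ((-23:ℝ)/15))
        ((-23:ℝ)/15 * (1:ℝ) ^ ((-23:ℝ)/15 - 1)) 1 :=
      Real.hasDerivAt_rpow_const (Or.inl one_ne_zero)
    have := (hu.mul hv).deriv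
    rw [show deriv g 1 = _ from this]
    norm_num [Real.one_rpow]
  · -- isolated local minimum
    have hcont : ∀ s : Set ℝ, s ⊆ Set.Ioi (0:ℝ) → ContinuousOn spin9Defect s := by
      intro s hs x hx
      exact (spin9_hasDerivAt (hs hx)).continuousAt.continuousWithinAt
    have hmono : StrictMonoOn spin9Defect (Set.Icc 1 (3/2)) := by
      apply strictMonoOn_of_deriv_pos (convex_Icc _ _)
      · exact hcont _ (fun x hx => lt_of_lt_of_le one_pos hx.1)
      · intro x hx
        rw [interior_Icc] at hx
        have hx0 : (0:ℝ) < x := lt_trans one_pos hx.1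
        rw [spin9_deriv_eq hx0]
        have h1 : (0:ℝ) < 11*x - 3 := by linarith [hx.1]
        have h2 : (0:ℝ) < x - 1 := by linarith [hx.1]
        have h3 : (0:ℝ) < x ^ ((-23:ℝ)/15) := Real.rpow_pos_of_pos hx0 _
        positivity
    have hanti : StrictAntiOn spin9Defect (Set.Icc (1/2:ℝ) 1) := by
      apply strictAntiOn_of_deriv_neg (convex_Icc _ _)
      · exact hcont _ (fun x hx => lt_of_lt_of_le (by norm_num) hx.1)
      · intro x hx
        rw [interior_Icc] at hx
        have hx0 : (0:ℝ) < x := lt_trans (by norm_num) hx.1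
        rw [spin9_deriv_eq hx0]
        have h1 : (0:ℝ) < 11*x - 3 := by linarith [hx.1]
        have h2 : x - 1 < 0 := by linarith [hx.2]
        have h3 : (0:ℝ) < x ^ ((-23:ℝ)/15) := Real.rpow_pos_of_pos hx0 _
        nlinarith [mul_pos h1 h3]
    refine ⟨1/2, by norm_num, fun c hc hcc hne => ?_⟩
    rw [abs_lt] at hcc
    rcases lt_or_gt_of_ne hne with hlt | hgt
    · have := hanti (Set.mem_Icc.mpr ⟨by linarith [hcc.1], le_of_lt hlt⟩)
        (Set.mem_Icc.mpr ⟨by norm_num, le_refl 1⟩) hlt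
      rw [h10] at this
      exact this
    · have := hmono (Set.mem_Icc.mpr ⟨le_refl 1, by norm_num⟩)
        (Set.mem_Icc.mpr ⟨le_of_lt hgt, by linarith [hcc.2]⟩) hgt
      rw [h10] at this
      exact this
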